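/- Escape case: let ρ(t) = ‖ξ(t)‖ be the length of the long Jacobi vector of a collision-free solution of the three-body problem defined on [0,∞) with total energy H = −h < 0 and total angular momentum norm ≤ j, along which the pair (1,2) realizes the minimal intermass distance for all large t, and suppose ρ(t) → +∞ as t → ∞. Then there exists T such that ρ̇(t) > 0 for all t ≥ T, ρ̇ is monotonically decreasing on [T, ∞), and the limit ν_∞ = lim_{t→∞} ρ̇(t) exists and satisfies ν_∞ ≥ 0. -/

import Mathlib

open scoped RealInnerProductSpace
open Set Filter

/-- The cross product on `ℝ³ = EuclideanSpace ℝ (Fin 3)`. -/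
noncomputable def cross3 (a b : EuclideanSpace ℝ (Fin 3)) : EuclideanSpace ℝ (Fin 3) :=
  WithLp.toLp 2 ![a 1 * b 2 - a 2 * b 1, a 2 * b 0 - a 0 * b 2, a 0 * b 1 - a 1 * b 0]


section aux
variable (a b c : EuclideanSpace ℝ (Fin 3))

lemma smul3 (s : ℝ) (i : Fin 3) : (s • a) i = s * a i := rfl
lemma add3 (i : Fin 3) : (a + b) i = a i + b i := rfl
lemma sub3 (i : Fin 3) : (a - b) i = a i - b i := rfl
lemma cross3_c (i : Fin 3) :
    cross3 a b i = ![a 1 * b 2 - a 2 * b 1, a 2 * b 0 - a 0 * b 2, a 0 * b 1 - a 1 * b 0] i := rfl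

lemma inner3 : ⟪a, b⟫ = a 0 * b 0 + a 1 * b 1 + a 2 * b 2 := by
  simp [PiLp.inner_apply, Fin.sum_univ_three, RCLike.inner_apply, mul_comm]

lemma normsq3 : ‖a‖ ^ 2 = a 0 ^ 2 + a 1 ^ 2 + a 2 ^ 2 := by
  rw [← real_inner_self_eq_norm_sq, inner3]; ring

lemma lagrange3 : ‖cross3 a b‖ ^ 2 = ‖a‖ ^ 2 * ‖b‖ ^ 2 - ⟪a, b⟫ ^ 2 := by
  rw [normsq3, normsq3, normsq3, inner3]
  show (a 1 * b 2 - a 2 * b 1) ^ 2 + (a 2 * b 0 - a 0 * b 2) ^ 2 + (a 0 * b 1 - a 1 * b 0) ^ 2 = _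
  ring

lemma cross3_norm_le : ‖cross3 a b‖ ≤ ‖a‖ * ‖b‖ := by
  have h := lagrange3 a b
  nlinarith [norm_nonneg (cross3 a b), norm_nonneg a, norm_nonneg b, sq_nonneg (⟪a, b⟫ : ℝ),
    mul_nonneg (norm_nonneg a) (norm_nonneg b)]

lemma cross3_add_left : cross3 (a + b) c = cross3 a c + cross3 b c := by
  ext i; rw [add3, cross3_c, cross3_c, cross3_c]
  fin_cases i <;> simp [add3] <;> ring

lemma cross3_add_right : cross3 a (b + c) = cross3 a b + cross3 a c := by
  ext i; rw [add3, cross3_c, cross3_c, cross3_c]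
  fin_cases i <;> simp [add3] <;> ring

lemma cross3_smul_left (s : ℝ) : cross3 (s • a) b = s • cross3 a b := by
  ext i; rw [smul3, cross3_c, cross3_c]
  fin_cases i <;> simp [smul3] <;> ring

lemma cross3_smul_right (s : ℝ) : cross3 a (s • b) = s • cross3 a b := by
  ext i; rw [smul3, cross3_c, cross3_c]
  fin_cases i <;> simp [smul3] <;> ring

lemma cross3_sub_left : cross3 (a - b) c = cross3 a c - cross3 b c := by
  ext i; rw [sub3, cross3_c, cross3_c, cross3_c]
  fin_cases i <;> simp [sub3] <;> ring

lemma cross3_sub_right : cross3 a (b - c) = cross3 a b - cross3 a c := by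
  ext i; rw [sub3, cross3_c, cross3_c, cross3_c]
  fin_cases i <;> simp [sub3] <;> ring

lemma cross3_self : cross3 a a = 0 := by
  ext i; rw [cross3_c]
  fin_cases i <;> simp <;> ring

end aux

lemma reduced_kinetic (m₁ m₂ : ℝ) (h1 : 0 < m₁) (h2 : 0 < m₂) (a b : EuclideanSpace ℝ (Fin 3)) :
    m₁ * m₂ / (m₁ + m₂) * ‖b - a‖ ^ 2 ≤ m₁ * ‖a‖ ^ 2 + m₂ * ‖b‖ ^ 2 := by
  have e1 : ‖b - a‖ ^ 2 = ‖b‖ ^ 2 - 2 * ⟪a, b⟫ + ‖a‖ ^ 2 := by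
    rw [norm_sub_sq_real, real_inner_comm]
  have e2 : ‖m₁ • a + m₂ • b‖ ^ 2 = m₁ ^ 2 * ‖a‖ ^ 2 + 2 * (m₁ * m₂) * ⟪a, b⟫ + m₂ ^ 2 * ‖b‖ ^ 2 := by
    rw [norm_add_sq_real, real_inner_smul_left, real_inner_smul_right, norm_smul, norm_smul,
      mul_pow, mul_pow]
    simp [Real.norm_eq_abs, sq_abs]
    ring
  have h0 : (0 : ℝ) ≤ ‖m₁ • a + m₂ • b‖ ^ 2 := sq_nonneg _
  rw [e2] at h0
  rw [div_mul_eq_mul_div, div_le_iff₀ (by positivity : (0:ℝ) < m₁ + m₂)]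
  rw [e1]
  nlinarith [h0]

set_option maxHeartbeats 2000000 in
lemma jacobi_decomp (m₁ m₂ m₃ : ℝ) (hm₁ : 0 < m₁) (hm₂ : 0 < m₂) (hm₃ : 0 < m₃)
    (a₁ a₂ a₃ b₁ b₂ b₃ : EuclideanSpace ℝ (Fin 3)) :
    m₁ • cross3 a₁ b₁ + m₂ • cross3 a₂ b₂ + m₃ • cross3 a₃ b₃ =
      (m₁ + m₂ + m₃)⁻¹ • cross3 (m₁ • a₁ + m₂ • a₂ + m₃ • a₃) (m₁ • b₁ + m₂ • b₂ + m₃ • b₃) +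
      (m₃ * (m₁ + m₂) / (m₁ + m₂ + m₃)) • cross3 (a₃ - (m₁ + m₂)⁻¹ • (m₁ • a₁ + m₂ • a₂))
        (b₃ - (m₁ + m₂)⁻¹ • (m₁ • b₁ + m₂ • b₂)) +
      (m₁ * m₂ / (m₁ + m₂)) • cross3 (a₂ - a₁) (b₂ - b₁) := by
  have h12 : m₁ + m₂ ≠ 0 := by positivity
  have hM : m₁ + m₂ + m₃ ≠ 0 := by positivity
  simp only [cross3_add_left, cross3_add_right, cross3_smul_left, cross3_smul_right,
    cross3_sub_left, cross3_sub_right, smul_add, smul_sub, smul_smul]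
  match_scalars <;> field_simp <;> ring

set_option maxHeartbeats 2000000 in
/-- **Escape case.** For a collision-free escape solution (`ρ → ∞`) of the three-body problem
on `[0,∞)` with total energy `−h < 0` and total angular momentum of norm `≤ j`, along which the
pair `(1,2)` realizes the minimal intermass distance for all large times, there is a `T` with
`ρ̇ > 0` on `[T,∞)`, `ρ̇` monotonically decreasing on `[T,∞)`, and `ρ̇(t)` tending to a limit
`ν_∞ ≥ 0` as `t → ∞` (here `ρ̇ = ⟨ξ, ξ̇⟩/ρ`). -/
theorem escape_radial_velocity_limit
    (m₁ m₂ m₃ h j : ℝ) (hm₁ : 0 < m₁) (hm₂ : 0 < m₂) (hm₃ : 0 < m₃)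
    (hh : 0 < h) (hj : 0 ≤ j)
    (x₁ x₂ x₃ v₁ v₂ v₃ : ℝ → EuclideanSpace ℝ (Fin 3))
    -- the long Jacobi vector, its velocity, its length, and the radial velocity ρ̇ = ⟨ξ,ξ̇⟩/ρ
    (ξ ξv : ℝ → EuclideanSpace ℝ (Fin 3)) (ρ ν : ℝ → ℝ)
    (hξ : ∀ t, ξ t = x₃ t - (m₁ + m₂)⁻¹ • (m₁ • x₁ t + m₂ • x₂ t))
    (hξv : ∀ t, ξv t = v₃ t - (m₁ + m₂)⁻¹ • (m₁ • v₁ t + m₂ • v₂ t))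
    (hρ : ∀ t, ρ t = ‖ξ t‖)
    (hν : ∀ t, ν t = ⟪ξ t, ξv t⟫ / ρ t)
    -- collision-free on [0,∞)
    (hsep : ∀ t ∈ Ici (0:ℝ), x₁ t ≠ x₂ t ∧ x₁ t ≠ x₃ t ∧ x₂ t ≠ x₃ t)
    -- velocities are the derivatives of the positions on [0,∞)
    (hx₁ : ∀ t ∈ Ici (0:ℝ), HasDerivWithinAt x₁ (v₁ t) (Ici 0) t)
    (hx₂ : ∀ t ∈ Ici (0:ℝ), HasDerivWithinAt x₂ (v₂ t) (Ici 0) t)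
    (hx₃ : ∀ t ∈ Ici (0:ℝ), HasDerivWithinAt x₃ (v₃ t) (Ici 0) t)
    -- Newton's equations on [0,∞)
    (hN₁ : ∀ t ∈ Ici (0:ℝ), HasDerivWithinAt v₁
      ((m₂ / ‖x₂ t - x₁ t‖ ^ 3) • (x₂ t - x₁ t) +
       (m₃ / ‖x₃ t - x₁ t‖ ^ 3) • (x₃ t - x₁ t)) (Ici 0) t)
    (hN₂ : ∀ t ∈ Ici (0:ℝ), HasDerivWithinAt v₂
      ((m₁ / ‖x₁ t - x₂ t‖ ^ 3) • (x₁ t - x₂ t) +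
       (m₃ / ‖x₃ t - x₂ t‖ ^ 3) • (x₃ t - x₂ t)) (Ici 0) t)
    (hN₃ : ∀ t ∈ Ici (0:ℝ), HasDerivWithinAt v₃
      ((m₁ / ‖x₁ t - x₃ t‖ ^ 3) • (x₁ t - x₃ t) +
       (m₂ / ‖x₂ t - x₃ t‖ ^ 3) • (x₂ t - x₃ t)) (Ici 0) t)
    -- total energy equal to −h
    (hH : ∀ t ∈ Ici (0:ℝ),
      (1 / 2) * (m₁ * ‖v₁ t‖ ^ 2 + m₂ * ‖v₂ t‖ ^ 2 + m₃ * ‖v₃ t‖ ^ 2) -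
        (m₁ * m₂ / ‖x₁ t - x₂ t‖ + m₁ * m₃ / ‖x₁ t - x₃ t‖ +
         m₂ * m₃ / ‖x₂ t - x₃ t‖) = -h)
    -- total angular momentum of norm ≤ j
    (hJ : ∀ t ∈ Ici (0:ℝ),
      ‖m₁ • cross3 (x₁ t) (v₁ t) + m₂ • cross3 (x₂ t) (v₂ t) +
        m₃ • cross3 (x₃ t) (v₃ t)‖ ≤ j)
    -- the pair (1,2) realizes the minimal intermass distance for all large t
    (T₀ : ℝ) (hmin : ∀ t ≥ T₀, 0 ≤ t →
      ‖x₁ t - x₂ t‖ ≤ ‖x₁ t - x₃ t‖ ∧ ‖x₁ t - x₂ t‖ ≤ ‖x₂ t - x₃ t‖)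
    -- escape: ρ(t) → ∞ as t → ∞
    (hesc : Tendsto ρ atTop atTop) :
    ∃ T : ℝ, 0 ≤ T ∧ (∀ t ≥ T, 0 < ν t) ∧ StrictAntiOn ν (Ici T) ∧
      ∃ νinf : ℝ, 0 ≤ νinf ∧ Tendsto ν atTop (nhds νinf) := by
  have hm12 : (0:ℝ) < m₁ + m₂ := by linarith
  have hMpos : (0:ℝ) < m₁ + m₂ + m₃ := by linarith
  set S : ℝ := m₁ * m₂ + m₁ * m₃ + m₂ * m₃ with hSdef
  have hSpos : 0 < S := by positivity
  set d : ℝ := S / h with hddef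
  have hdpos : 0 < d := by positivity
  set μ : ℝ := m₃ * (m₁ + m₂) / (m₁ + m₂ + m₃) with hμdef
  have hμpos : 0 < μ := by positivity
  set μ₁₂ : ℝ := m₁ * m₂ / (m₁ + m₂) with hμ₁₂def
  have hμ₁₂pos : 0 < μ₁₂ := by positivity
  -- separation positivity
  have hpos12 : ∀ t ∈ Ici (0:ℝ), 0 < ‖x₂ t - x₁ t‖ := fun t ht =>
    norm_sub_pos_iff.mpr (hsep t ht).1.symm
  have hpos13 : ∀ t ∈ Ici (0:ℝ), 0 < ‖x₃ t - x₁ t‖ := fun t ht =>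
    norm_sub_pos_iff.mpr (hsep t ht).2.1.symm
  have hpos23 : ∀ t ∈ Ici (0:ℝ), 0 < ‖x₃ t - x₂ t‖ := fun t ht =>
    norm_sub_pos_iff.mpr (hsep t ht).2.2.symm
  have e12 : ∀ t, ‖x₁ t - x₂ t‖ = ‖x₂ t - x₁ t‖ := fun t => norm_sub_rev _ _
  have e13 : ∀ t, ‖x₁ t - x₃ t‖ = ‖x₃ t - x₁ t‖ := fun t => norm_sub_rev _ _
  have e23 : ∀ t, ‖x₂ t - x₃ t‖ = ‖x₃ t - x₂ t‖ := fun t => norm_sub_rev _ _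
  -- energy consequences
  have hUbound : ∀ t ∈ Ici (0:ℝ), T₀ ≤ t →
      h ≤ S / ‖x₂ t - x₁ t‖ ∧
      m₁ * ‖v₁ t‖ ^ 2 + m₂ * ‖v₂ t‖ ^ 2 ≤ 2 * (S / ‖x₂ t - x₁ t‖) := by
    intro t ht hT
    have hmin' := hmin t hT ht
    have hH' := hH t ht
    have h12p := hpos12 t ht
    have h13p := hpos13 t ht
    have h23p := hpos23 t ht
    rw [e12, e13, e23] at hmin' hH'
    have hU1 : m₁ * m₃ / ‖x₃ t - x₁ t‖ ≤ m₁ * m₃ / ‖x₂ t - x₁ t‖ :=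
      div_le_div_of_nonneg_left (by positivity) h12p hmin'.1
    have hU2 : m₂ * m₃ / ‖x₃ t - x₂ t‖ ≤ m₂ * m₃ / ‖x₂ t - x₁ t‖ :=
      div_le_div_of_nonneg_left (by positivity) h12p hmin'.2
    have hk1 : 0 ≤ m₁ * ‖v₁ t‖ ^ 2 := by positivity
    have hk2 : 0 ≤ m₂ * ‖v₂ t‖ ^ 2 := by positivity
    have hk3 : 0 ≤ m₃ * ‖v₃ t‖ ^ 2 := by positivity
    have hSdiv : m₁ * m₂ / ‖x₂ t - x₁ t‖ + m₁ * m₃ / ‖x₂ t - x₁ t‖ + m₂ * m₃ / ‖x₂ t - x₁ t‖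
        = S / ‖x₂ t - x₁ t‖ := by rw [hSdef]; field_simp
    constructor
    · nlinarith [hH', hU1, hU2]
    · nlinarith [hH', hU1, hU2]
  have hr12 : ∀ t ∈ Ici (0:ℝ), T₀ ≤ t → ‖x₂ t - x₁ t‖ ≤ d := by
    intro t ht hT
    have h12p := hpos12 t ht
    have hU := (hUbound t ht hT).1
    rw [le_div_iff₀ h12p] at hU
    rw [hddef, le_div_iff₀ hh]
    linarith [hU]
  have hL : ∀ t ∈ Ici (0:ℝ), T₀ ≤ t →
      ‖cross3 (x₂ t - x₁ t) (v₂ t - v₁ t)‖ ≤ Real.sqrt (2 * S * d / μ₁₂) := by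
    intro t ht hT
    have h12p := hpos12 t ht
    have hd12 := hr12 t ht hT
    have hkin := (hUbound t ht hT).2
    have hred := reduced_kinetic m₁ m₂ hm₁ hm₂ (v₁ t) (v₂ t)
    rw [← hμ₁₂def] at hred
    have hrv2 : μ₁₂ * ‖v₂ t - v₁ t‖ ^ 2 ≤ 2 * S / ‖x₂ t - x₁ t‖ := by
      rw [mul_div_assoc]; linarith
    have hcn : ‖cross3 (x₂ t - x₁ t) (v₂ t - v₁ t)‖ ≤ ‖x₂ t - x₁ t‖ * ‖v₂ t - v₁ t‖ :=
      cross3_norm_le _ _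
    rw [show (2 : ℝ) * S * d / μ₁₂ = 2 * S * d / μ₁₂ from rfl]
    rw [Real.le_sqrt (norm_nonneg _)]
    calc ‖cross3 (x₂ t - x₁ t) (v₂ t - v₁ t)‖ ^ 2
        ≤ (‖x₂ t - x₁ t‖ * ‖v₂ t - v₁ t‖) ^ 2 := by
          have := norm_nonneg (cross3 (x₂ t - x₁ t) (v₂ t - v₁ t))
          nlinarith
      _ = ‖x₂ t - x₁ t‖ ^ 2 * ‖v₂ t - v₁ t‖ ^ 2 := by ring
      _ ≤ 2 * S * d / μ₁₂ := by
          have h1 : μ₁₂ * ‖v₂ t - v₁ t‖ ^ 2 * ‖x₂ t - x₁ t‖ ≤ 2 * S :=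
            (le_div_iff₀ h12p).mp hrv2
          have h2 := mul_le_mul_of_nonneg_left h1 (norm_nonneg (x₂ t - x₁ t))
          have h3 : ‖x₂ t - x₁ t‖ * (2 * S) ≤ d * (2 * S) :=
            mul_le_mul_of_nonneg_right hd12 (by positivity)
          rw [le_div_iff₀ hμ₁₂pos]
          nlinarith [h2, h3]
    exact le_of_lt (div_pos (by nlinarith [hSpos, hdpos]) hμ₁₂pos)
  -- conservation of linear momentum
  set sv : ℝ → EuclideanSpace ℝ (Fin 3) := fun t => m₁ • v₁ t + m₂ • v₂ t + m₃ • v₃ t with hsvdef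
  set sx : ℝ → EuclideanSpace ℝ (Fin 3) := fun t => m₁ • x₁ t + m₂ • x₂ t + m₃ • x₃ t with hsxdef
  have hsvd : ∀ t ∈ Ici (0:ℝ), HasDerivWithinAt sv 0 (Ici 0) t := by
    intro t ht
    have hb := (((hN₁ t ht).const_smul m₁).add ((hN₂ t ht).const_smul m₂)).add
      ((hN₃ t ht).const_smul m₃)
    rw [hsvdef]
    refine hb.congr_deriv ?_
    rw [e12, e13, e23]
    match_scalars <;> ring
  have hsvconst : ∀ t ∈ Ici (0:ℝ), sv t = sv 0 := by
    intro t ht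
    have hb := Convex.norm_image_sub_le_of_norm_hasDerivWithin_le
      (f' := fun _ => (0 : EuclideanSpace ℝ (Fin 3))) (C := 0) hsvd
      (fun x _ => by simp) (convex_Ici 0) self_mem_Ici ht
    simpa [sub_eq_zero] using hb
  have hsxd : ∀ t ∈ Ici (0:ℝ), HasDerivWithinAt (fun s => sx s - s • sv 0) 0 (Ici 0) t := by
    intro t ht
    have hb := ((((hx₁ t ht).const_smul m₁).add ((hx₂ t ht).const_smul m₂)).add
      ((hx₃ t ht).const_smul m₃)).sub (((hasDerivAt_id t).smul_const (sv 0)).hasDerivWithinAt)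
    rw [hsxdef]
    refine hb.congr_deriv ?_
    rw [← hsvconst t ht, hsvdef, one_smul]
    exact sub_self _
  have hsxlin : ∀ t ∈ Ici (0:ℝ), sx t = sx 0 + t • sv 0 := by
    intro t ht
    have hb := Convex.norm_image_sub_le_of_norm_hasDerivWithin_le
      (f' := fun _ => (0 : EuclideanSpace ℝ (Fin 3))) (C := 0) hsxd
      (fun x _ => by simp) (convex_Ici 0) self_mem_Ici ht
    simp only [zero_mul, zero_smul, sub_zero] at hb
    have : sx t - t • sv 0 = sx 0 := by
      have := norm_le_zero_iff.mp (le_trans hb (by norm_num))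
      rw [sub_eq_zero] at this
      simpa using this
    rw [← this]; abel
  have hcm : ∀ t ∈ Ici (0:ℝ), cross3 (sx t) (sv t) = cross3 (sx 0) (sv 0) := by
    intro t ht
    rw [hsvconst t ht, hsxlin t ht, cross3_add_left, cross3_smul_left, cross3_self]
    simp
  -- angular momentum bound on the Jacobi cross product
  set c₀ : ℝ := ‖(m₁ + m₂ + m₃)⁻¹ • cross3 (sx 0) (sv 0)‖ with hc₀def
  set L : ℝ := Real.sqrt (2 * S * d / μ₁₂) with hLdef
  have hLnn : 0 ≤ L := Real.sqrt_nonneg _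
  set K : ℝ := (j + c₀ + μ₁₂ * L) / μ with hKdef
  have hKnn : 0 ≤ K := by
    rw [hKdef]
    have : (0:ℝ) ≤ c₀ := norm_nonneg _
    positivity
  have hcrossK : ∀ t ∈ Ici (0:ℝ), T₀ ≤ t → ‖cross3 (ξ t) (ξv t)‖ ≤ K := by
    intro t ht hT
    have hdec := jacobi_decomp m₁ m₂ m₃ hm₁ hm₂ hm₃ (x₁ t) (x₂ t) (x₃ t) (v₁ t) (v₂ t) (v₃ t)
    have hxi : μ • cross3 (ξ t) (ξv t) =
        (m₁ • cross3 (x₁ t) (v₁ t) + m₂ • cross3 (x₂ t) (v₂ t) + m₃ • cross3 (x₃ t) (v₃ t))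
        - (m₁ + m₂ + m₃)⁻¹ • cross3 (sx t) (sv t)
        - μ₁₂ • cross3 (x₂ t - x₁ t) (v₂ t - v₁ t) := by
      rw [hξ, hξv, hμdef, hμ₁₂def, hsxdef, hsvdef, hdec]
      abel
    have hnorm : μ * ‖cross3 (ξ t) (ξv t)‖ ≤ j + c₀ + μ₁₂ * L := by
      have h1 : ‖μ • cross3 (ξ t) (ξv t)‖ = μ * ‖cross3 (ξ t) (ξv t)‖ := by
        rw [norm_smul, Real.norm_eq_abs, abs_of_pos hμpos]
      have h2 : ‖μ₁₂ • cross3 (x₂ t - x₁ t) (v₂ t - v₁ t)‖ ≤ μ₁₂ * L := by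
        rw [norm_smul, Real.norm_eq_abs, abs_of_pos hμ₁₂pos]
        exact mul_le_mul_of_nonneg_left (hL t ht hT) hμ₁₂pos.le
      have h3 : ‖(m₁ + m₂ + m₃)⁻¹ • cross3 (sx t) (sv t)‖ = c₀ := by
        rw [hcm t ht, hc₀def]
      calc μ * ‖cross3 (ξ t) (ξv t)‖ = ‖μ • cross3 (ξ t) (ξv t)‖ := h1.symm
        _ ≤ ‖(m₁ • cross3 (x₁ t) (v₁ t) + m₂ • cross3 (x₂ t) (v₂ t) + m₃ • cross3 (x₃ t) (v₃ t))
            - (m₁ + m₂ + m₃)⁻¹ • cross3 (sx t) (sv t)‖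
            + ‖μ₁₂ • cross3 (x₂ t - x₁ t) (v₂ t - v₁ t)‖ := by rw [hxi]; exact norm_sub_le _ _
        _ ≤ (‖m₁ • cross3 (x₁ t) (v₁ t) + m₂ • cross3 (x₂ t) (v₂ t) + m₃ • cross3 (x₃ t) (v₃ t)‖
            + ‖(m₁ + m₂ + m₃)⁻¹ • cross3 (sx t) (sv t)‖)
            + ‖μ₁₂ • cross3 (x₂ t - x₁ t) (v₂ t - v₁ t)‖ := by
              exact add_le_add_left (norm_sub_le _ _) _
        _ ≤ j + c₀ + μ₁₂ * L := by
              rw [h3]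
              exact add_le_add (add_le_add_left (hJ t ht) _) h2
    rw [hKdef, le_div_iff₀ hμpos]
    linarith [hnorm]
  -- derivatives of the Jacobi vector
  have hξd : ∀ t ∈ Ici (0:ℝ), HasDerivWithinAt ξ (ξv t) (Ici 0) t := by
    intro t ht
    rw [funext hξ, hξv t]
    exact (hx₃ t ht).sub
      ((((hx₁ t ht).const_smul m₁).add ((hx₂ t ht).const_smul m₂)).const_smul (m₁ + m₂)⁻¹)
  set ξa : ℝ → EuclideanSpace ℝ (Fin 3) := fun t =>
    (-((m₁ + m₂ + m₃) / (m₁ + m₂))) •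
      ((m₁ / ‖x₃ t - x₁ t‖ ^ 3) • (x₃ t - x₁ t) + (m₂ / ‖x₃ t - x₂ t‖ ^ 3) • (x₃ t - x₂ t))
    with hξadef
  have hξvd : ∀ t ∈ Ici (0:ℝ), HasDerivWithinAt ξv (ξa t) (Ici 0) t := by
    intro t ht
    rw [funext hξv, hξadef]
    have hb := (hN₃ t ht).sub
      ((((hN₁ t ht).const_smul m₁).add ((hN₂ t ht).const_smul m₂)).const_smul (m₁ + m₂)⁻¹)
    refine hb.congr_deriv ?_
    rw [e12, e13, e23]
    have h12 : m₁ + m₂ ≠ 0 := ne_of_gt hm12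
    have h13n : ‖x₃ t - x₁ t‖ ≠ 0 := ne_of_gt (hpos13 t ht)
    have h23n : ‖x₃ t - x₂ t‖ ≠ 0 := ne_of_gt (hpos23 t ht)
    have h12n : ‖x₂ t - x₁ t‖ ≠ 0 := ne_of_gt (hpos12 t ht)
    match_scalars <;> field_simp <;> ring
  -- geometric decompositions
  have hgeo13 : ∀ t, x₃ t - x₁ t = ξ t + (m₂ / (m₁ + m₂)) • (x₂ t - x₁ t) := by
    intro t
    rw [hξ]
    have h12 : m₁ + m₂ ≠ 0 := ne_of_gt hm12
    match_scalars <;> field_simp <;> ring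
  have hgeo23 : ∀ t, x₃ t - x₂ t = ξ t - (m₁ / (m₁ + m₂)) • (x₂ t - x₁ t) := by
    intro t
    rw [hξ]
    have h12 : m₁ + m₂ ≠ 0 := ne_of_gt hm12
    match_scalars <;> field_simp <;> ring
  -- the radial force estimate
  have hinner : ∀ t ∈ Ici (0:ℝ), T₀ ≤ t → 2 * d ≤ ρ t →
      ⟪ξ t, ξa t⟫ ≤ -(4 * (m₁ + m₂ + m₃) / 27) / ρ t := by
    intro t ht hT hρ2
    have hρpos : 0 < ρ t := lt_of_lt_of_le (by positivity) hρ2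
    have hrr := hr12 t ht hT
    have hnξ : ‖ξ t‖ = ρ t := (hρ t).symm
    have hiprr : |⟪ξ t, x₂ t - x₁ t⟫| ≤ ρ t * d := by
      refine (abs_real_inner_le_norm _ _).trans ?_
      rw [hnξ]
      exact mul_le_mul_of_nonneg_left hrr hρpos.le
    have hiprr' := abs_le.mp hiprr
    have hc2 : m₂ / (m₁ + m₂) ≤ 1 := by
      rw [div_le_one hm12]; linarith
    have hc2' : 0 ≤ m₂ / (m₁ + m₂) := by positivity
    have hc1 : m₁ / (m₁ + m₂) ≤ 1 := by
      rw [div_le_one hm12]; linarith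
    have hc1' : 0 ≤ m₁ / (m₁ + m₂) := by positivity
    -- inner products with the two separation vectors
    have hip13 : ρ t ^ 2 / 2 ≤ ⟪ξ t, x₃ t - x₁ t⟫ := by
      rw [hgeo13 t, inner_add_right, real_inner_smul_right, real_inner_self_eq_norm_sq, hnξ]
      nlinarith [mul_nonneg hc2' (by linarith [hiprr'.1] : (0:ℝ) ≤ ⟪ξ t, x₂ t - x₁ t⟫ + ρ t * d),
        mul_nonneg (by linarith : (0:ℝ) ≤ 1 - m₂ / (m₁ + m₂)) (mul_pos hρpos hdpos).le]
    have hip23 : ρ t ^ 2 / 2 ≤ ⟪ξ t, x₃ t - x₂ t⟫ := by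
      rw [hgeo23 t, inner_sub_right, real_inner_smul_right, real_inner_self_eq_norm_sq, hnξ]
      nlinarith [mul_nonneg hc1' (by linarith [hiprr'.2] : (0:ℝ) ≤ ρ t * d - ⟪ξ t, x₂ t - x₁ t⟫),
        mul_nonneg (by linarith : (0:ℝ) ≤ 1 - m₁ / (m₁ + m₂)) (mul_pos hρpos hdpos).le]
    -- distance upper bounds
    have hn13 : ‖x₃ t - x₁ t‖ ≤ 3 / 2 * ρ t := by
      rw [hgeo13 t]
      refine (norm_add_le _ _).trans ?_
      rw [hnξ, norm_smul, Real.norm_eq_abs, abs_of_nonneg hc2']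
      have : m₂ / (m₁ + m₂) * ‖x₂ t - x₁ t‖ ≤ 1 * d :=
        mul_le_mul hc2 hrr (norm_nonneg _) zero_le_one
      linarith
    have hn23 : ‖x₃ t - x₂ t‖ ≤ 3 / 2 * ρ t := by
      rw [hgeo23 t]
      refine (norm_sub_le _ _).trans ?_
      rw [hnξ, norm_smul, Real.norm_eq_abs, abs_of_nonneg hc1']
      have : m₁ / (m₁ + m₂) * ‖x₂ t - x₁ t‖ ≤ 1 * d :=
        mul_le_mul hc1 hrr (norm_nonneg _) zero_le_one
      linarith
    have h13p := hpos13 t ht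
    have h23p := hpos23 t ht
    -- per-term lower bounds
    have hterm13 : 4 / 27 * m₁ / ρ t ≤ m₁ / ‖x₃ t - x₁ t‖ ^ 3 * ⟪ξ t, x₃ t - x₁ t⟫ := by
      calc (4:ℝ) / 27 * m₁ / ρ t = m₁ * (ρ t ^ 2 / 2) / ((3 / 2 * ρ t) ^ 3) := by
            field_simp; ring
        _ ≤ m₁ * ⟪ξ t, x₃ t - x₁ t⟫ / ‖x₃ t - x₁ t‖ ^ 3 := by
            apply div_le_div₀ (mul_nonneg hm₁.le (le_trans (by positivity) hip13))
            · exact mul_le_mul_of_nonneg_left hip13 hm₁.le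
            · positivity
            · exact pow_le_pow_left₀ h13p.le hn13 3
        _ = m₁ / ‖x₃ t - x₁ t‖ ^ 3 * ⟪ξ t, x₃ t - x₁ t⟫ := by ring
    have hterm23 : 4 / 27 * m₂ / ρ t ≤ m₂ / ‖x₃ t - x₂ t‖ ^ 3 * ⟪ξ t, x₃ t - x₂ t⟫ := by
      calc (4:ℝ) / 27 * m₂ / ρ t = m₂ * (ρ t ^ 2 / 2) / ((3 / 2 * ρ t) ^ 3) := by
            field_simp; ring
        _ ≤ m₂ * ⟪ξ t, x₃ t - x₂ t⟫ / ‖x₃ t - x₂ t‖ ^ 3 := by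
            apply div_le_div₀ (mul_nonneg hm₂.le (le_trans (by positivity) hip23))
            · exact mul_le_mul_of_nonneg_left hip23 hm₂.le
            · positivity
            · exact pow_le_pow_left₀ h23p.le hn23 3
        _ = m₂ / ‖x₃ t - x₂ t‖ ^ 3 * ⟪ξ t, x₃ t - x₂ t⟫ := by ring
    -- assemble
    have hval : ⟪ξ t, ξa t⟫ = -((m₁ + m₂ + m₃) / (m₁ + m₂)) *
        (m₁ / ‖x₃ t - x₁ t‖ ^ 3 * ⟪ξ t, x₃ t - x₁ t⟫ +
         m₂ / ‖x₃ t - x₂ t‖ ^ 3 * ⟪ξ t, x₃ t - x₂ t⟫) := by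
      rw [hξadef]
      simp only [inner_add_right, real_inner_smul_right]
    rw [hval]
    have hsum : 4 / 27 * (m₁ + m₂) / ρ t ≤
        m₁ / ‖x₃ t - x₁ t‖ ^ 3 * ⟪ξ t, x₃ t - x₁ t⟫ +
        m₂ / ‖x₃ t - x₂ t‖ ^ 3 * ⟪ξ t, x₃ t - x₂ t⟫ := by
      have : (4:ℝ) / 27 * (m₁ + m₂) / ρ t = 4 / 27 * m₁ / ρ t + 4 / 27 * m₂ / ρ t := by
        field_simp
      rw [this]
      exact add_le_add hterm13 hterm23
    have hcoef : -((m₁ + m₂ + m₃) / (m₁ + m₂)) < 0 := neg_lt_zero.mpr (by positivity)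
    calc -((m₁ + m₂ + m₃) / (m₁ + m₂)) *
        (m₁ / ‖x₃ t - x₁ t‖ ^ 3 * ⟪ξ t, x₃ t - x₁ t⟫ +
         m₂ / ‖x₃ t - x₂ t‖ ^ 3 * ⟪ξ t, x₃ t - x₂ t⟫)
        ≤ -((m₁ + m₂ + m₃) / (m₁ + m₂)) * (4 / 27 * (m₁ + m₂) / ρ t) :=
          mul_le_mul_of_nonpos_left hsum (le_of_lt hcoef)
      _ = -(4 * (m₁ + m₂ + m₃) / 27) / ρ t := by
          field_simp
  -- derivative of ρ and ν
  have hρd : ∀ t ∈ Ici (0:ℝ), 0 < ρ t → HasDerivWithinAt ρ (ν t) (Ici 0) t := by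
    intro t ht hρpos
    have hq : HasDerivWithinAt (fun s => ⟪ξ s, ξ s⟫)
        (⟪ξ t, ξv t⟫ + ⟪ξv t, ξ t⟫) (Ici 0) t :=
      HasDerivWithinAt.inner ℝ (hξd t ht) (hξd t ht)
    have hqpos : (0:ℝ) < ⟪ξ t, ξ t⟫ := by
      rw [real_inner_self_eq_norm_sq, ← hρ]
      positivity
    have hsq := (Real.hasDerivAt_sqrt (ne_of_gt hqpos)).comp_hasDerivWithinAt t hq
    have hfun : ρ = fun s => Real.sqrt ⟪ξ s, ξ s⟫ := by
      funext s
      rw [hρ, norm_eq_sqrt_real_inner]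
    rw [hfun]
    refine hsq.congr_deriv ?_
    have hsqrt : Real.sqrt ⟪ξ t, ξ t⟫ = ρ t := by
      rw [hρ, norm_eq_sqrt_real_inner]
    rw [hν, hsqrt, real_inner_comm (ξv t) (ξ t)]
    field_simp
    ring
  set νd : ℝ → ℝ := fun t =>
    ((⟪ξ t, ξa t⟫ + ⟪ξv t, ξv t⟫) * ρ t - ⟪ξ t, ξv t⟫ * ν t) / ρ t ^ 2 with hνddef
  have hνdiff : ∀ t ∈ Ici (0:ℝ), 0 < ρ t → HasDerivWithinAt ν (νd t) (Ici 0) t := by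
    intro t ht hρpos
    have hp : HasDerivWithinAt (fun s => ⟪ξ s, ξv s⟫)
        (⟪ξ t, ξa t⟫ + ⟪ξv t, ξv t⟫) (Ici 0) t :=
      HasDerivWithinAt.inner ℝ (hξd t ht) (hξvd t ht)
    have hfun : ν = fun s => ⟪ξ s, ξv s⟫ / ρ s := funext hν
    rw [hfun, hνddef]
    exact hp.div (hρd t ht hρpos) (ne_of_gt hρpos)
  -- negativity of the derivative of ν for large ρ
  set R : ℝ := max (2 * d) (27 * K ^ 2 / (4 * (m₁ + m₂ + m₃)) + 1) with hRdef
  have hRpos : 0 < R := lt_of_lt_of_le (by positivity) (le_max_left _ _)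
  have hνdneg : ∀ t ∈ Ici (0:ℝ), T₀ ≤ t → R ≤ ρ t → νd t < 0 := by
    intro t ht hT hR
    have hρ2d : 2 * d ≤ ρ t := le_trans (le_max_left _ _) hR
    have hρpos : 0 < ρ t := lt_of_lt_of_le hRpos hR
    have hid : νd t = (⟪ξ t, ξa t⟫ * ρ t ^ 2 + ‖cross3 (ξ t) (ξv t)‖ ^ 2) / ρ t ^ 3 := by
      have hc2 : ‖cross3 (ξ t) (ξv t)‖ ^ 2 = ρ t ^ 2 * ‖ξv t‖ ^ 2 - ⟪ξ t, ξv t⟫ ^ 2 := by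
        rw [lagrange3, hρ]
      rw [hνddef]
      simp only []
      rw [hν t, real_inner_self_eq_norm_sq, hc2]
      field_simp
      ring
    rw [hid]
    apply div_neg_of_neg_of_pos _ (by positivity)
    have hA := hinner t ht hT hρ2d
    have hA2 : ⟪ξ t, ξa t⟫ * ρ t ^ 2 ≤ -(4 * (m₁ + m₂ + m₃) / 27) * ρ t := by
      have := mul_le_mul_of_nonneg_right hA (sq_nonneg (ρ t))
      calc ⟪ξ t, ξa t⟫ * ρ t ^ 2 ≤ -(4 * (m₁ + m₂ + m₃) / 27) / ρ t * ρ t ^ 2 := this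
        _ = -(4 * (m₁ + m₂ + m₃) / 27) * ρ t := by field_simp
    have hC := hcrossK t ht hT
    have hC2 : ‖cross3 (ξ t) (ξv t)‖ ^ 2 ≤ K ^ 2 := by
      nlinarith [norm_nonneg (cross3 (ξ t) (ξv t))]
    have hρbig : 27 * K ^ 2 / (4 * (m₁ + m₂ + m₃)) + 1 ≤ ρ t := le_trans (le_max_right _ _) hR
    have hfield : 4 * (m₁ + m₂ + m₃) / 27 * (27 * K ^ 2 / (4 * (m₁ + m₂ + m₃)) + 1)
        = K ^ 2 + 4 * (m₁ + m₂ + m₃) / 27 := by field_simp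
    nlinarith [mul_le_mul_of_nonneg_left hρbig (by positivity : (0:ℝ) ≤ 4 * (m₁ + m₂ + m₃) / 27)]
  -- choice of T
  obtain ⟨T₁, hT₁⟩ := eventually_atTop.mp (hesc.eventually_ge_atTop R)
  set Tm : ℝ := max T₁ (max T₀ 0) with hTmdef
  have hTm0 : (0:ℝ) ≤ Tm := le_max_of_le_right (le_max_right _ _)
  have hmem : ∀ t, Tm ≤ t → t ∈ Ici (0:ℝ) := fun t htt => le_trans hTm0 htt
  have hTT₀ : ∀ t, Tm ≤ t → T₀ ≤ t := fun t htt =>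
    le_trans (le_trans (le_max_left _ _) (le_max_right T₁ _)) htt
  have hTR : ∀ t, Tm ≤ t → R ≤ ρ t := fun t htt =>
    hT₁ t (le_trans (le_max_left _ _) htt)
  have hρposT : ∀ t, Tm ≤ t → 0 < ρ t := fun t htt => lt_of_lt_of_le hRpos (hTR t htt)
  -- strict monotonicity
  have hanti : StrictAntiOn ν (Ici Tm) := by
    apply strictAntiOn_of_deriv_neg (convex_Ici Tm)
    · exact fun t htt => ((hνdiff t (hmem t htt) (hρposT t htt)).continuousWithinAt).mono
        (fun s hs => le_trans hTm0 hs)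
    · intro t htt
      rw [interior_Ici] at htt
      have h0t : (0:ℝ) < t := lt_of_le_of_lt hTm0 htt
      have hd := (hνdiff t h0t.le (hρposT t htt.le)).hasDerivAt (Ici_mem_nhds h0t)
      rw [hd.deriv]
      exact hνdneg t h0t.le (hTT₀ t htt.le) (hTR t htt.le)
  -- positivity of ν
  have hνpos : ∀ t, Tm ≤ t → 0 < ν t := by
    intro t htt
    by_contra hcon
    push_neg at hcon
    have hρanti : AntitoneOn ρ (Ici t) := by
      apply antitoneOn_of_deriv_nonpos (convex_Ici t)
      · exact fun s hs => ((hρd s (hmem s (le_trans htt hs)) (hρposT s (le_trans htt hs))).continuousWithinAt).mono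
          (fun u hu => le_trans (le_trans hTm0 htt) hu)
      · intro s hs
        rw [interior_Ici] at hs
        have h0s : (0:ℝ) < s := lt_of_le_of_lt (le_trans hTm0 htt) hs
        exact ((hρd s h0s.le (hρposT s (le_trans htt hs.le))).hasDerivAt
          (Ici_mem_nhds h0s)).differentiableAt.differentiableWithinAt
      · intro s hs
        rw [interior_Ici] at hs
        have h0s : (0:ℝ) < s := lt_of_le_of_lt (le_trans hTm0 htt) hs
        rw [((hρd s h0s.le (hρposT s (le_trans htt hs.le))).hasDerivAt
          (Ici_mem_nhds h0s)).deriv]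
        have : ν s < ν t := hanti (le_trans htt (le_refl t) : t ∈ Ici Tm)
          (le_trans htt hs.le : s ∈ Ici Tm) hs
        linarith
    obtain ⟨s, hs1, hs2⟩ := ((hesc.eventually_gt_atTop (ρ t)).and (eventually_ge_atTop t)).exists
    exact absurd (hρanti self_mem_Ici hs2 hs2) (not_le.mpr hs1)
  -- the limit
  have hmono : Antitone (fun t => ν (max t Tm)) := by
    intro a b hab
    show ν (max b Tm) ≤ ν (max a Tm)
    rcases lt_or_eq_of_le (max_le_max hab (le_refl Tm)) with hlt | heq
    · exact (hanti (le_max_right a Tm) (le_max_right b Tm) hlt).le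
    · rw [heq]
  have hbdd : BddBelow (range fun t => ν (max t Tm)) :=
    ⟨0, by rintro y ⟨i, rfl⟩; exact (hνpos _ (le_max_right i Tm)).le⟩
  have htend := tendsto_atTop_ciInf hmono hbdd
  refine ⟨Tm, hTm0, fun t htt => hνpos t htt, hanti, ⨅ i : ℝ, ν (max i Tm),
    le_ciInf fun i => (hνpos _ (le_max_right i Tm)).le, ?_⟩
  apply Filter.Tendsto.congr' _ htend
  filter_upwards [eventually_ge_atTop Tm] with t htt
  rw [max_eq_left htt]
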